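/- arXiv:math/0305258 — 2 statements merged into one kernel-verified Lean document; each statement's English description precedes it below -/
import Mathlib

section
/- Let G be a group of unipotent elements of GL(n, ℂ) (every element g of G satisfies (g - 1)^n = 0, with G a subgroup of GL(n,ℂ)). Then there exists a nonzero vector v ∈ ℂ^n fixed by every element of G. -/
open Module LinearMap Polynomial

lemma trace_eq_zero_of_isNilpotent' {V : Type} [AddCommGroup V] [Module ℂ V]
    [FiniteDimensional ℂ V] {f : Module.End ℂ V} (hf : IsNilpotent f) :
    trace ℂ V f = 0 :=
  (LinearMap.isNilpotent_trace_of_isNilpotent hf).eq_zero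

lemma trace_pow_of_nilpotent_sub {V : Type} [AddCommGroup V] [Module ℂ V]
    [FiniteDimensional ℂ V] (g : Module.End ℂ V) (μ : ℂ)
    (h : IsNilpotent (g - algebraMap ℂ (Module.End ℂ V) μ)) (k : ℕ) :
    trace ℂ V (g ^ k) = μ ^ k * (finrank ℂ V : ℂ) := by
  set b := g - algebraMap ℂ (Module.End ℂ V) μ with hb
  have hg : g = algebraMap ℂ (Module.End ℂ V) μ + b := by rw [hb]; abel
  have hcomm : Commute (algebraMap ℂ (Module.End ℂ V) μ) b := Algebra.commute_algebraMap_left μ b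
  rw [hg, hcomm.add_pow, map_sum]
  rw [Finset.sum_eq_single k]
  · simp [trace_one, Algebra.algebraMap_eq_smul_one, _root_.smul_pow, mul_comm]
  · intro i hi hik
    have hki : k - i ≠ 0 := by simp only [Finset.mem_range] at hi; omega
    have h1 : IsNilpotent (b ^ (k - i)) := by
      obtain ⟨m, hm⟩ := h
      exact ⟨m, by rw [← pow_mul, mul_comm, pow_mul, hm, zero_pow hki]⟩
    have h2 : IsNilpotent (algebraMap ℂ (Module.End ℂ V) μ ^ i * b ^ (k - i)
        * (k.choose i : Module.End ℂ V)) :=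
      Commute.isNilpotent_mul_right ((Nat.cast_commute _ _).symm)
        (Commute.isNilpotent_mul_left (hcomm.pow_pow i (k - i)) h1)
    rw [trace_eq_zero_of_isNilpotent' h2]
  · intro h; simp at h

/-- If all power traces vanish, an endomorphism of a f.d. complex vector space is nilpotent. -/
lemma isNilpotent_of_trace_pow_eq_zero {V : Type} [AddCommGroup V] [Module ℂ V]
    [FiniteDimensional ℂ V] (f : Module.End ℂ V)
    (h : ∀ k : ℕ, 1 ≤ k → trace ℂ V (f ^ k) = 0) : IsNilpotent f := by
  classical
  rcases subsingleton_or_nontrivial V with hV | hV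
  · exact ⟨1, Subsingleton.elim _ _⟩
  set E : ℂ → Submodule ℂ V := f.maxGenEigenspace with hE
  have htop : ⨆ μ, E μ = ⊤ := f.iSup_maxGenEigenspace_eq_top
  have hind := f.independent_maxGenEigenspace
  have hds : DirectSum.IsInternal E :=
    DirectSum.isInternal_submodule_of_iSupIndep_of_iSup_eq_top hind htop
  have hfin : {μ | E μ ≠ ⊥}.Finite := WellFoundedGT.finite_ne_bot_of_iSupIndep hind
  set s := hfin.toFinset with hs
  -- maps-to facts
  have hm1 : ∀ μ : ℂ, Set.MapsTo f (E μ) (E μ) := fun μ ↦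
    f.mapsTo_maxGenEigenspace_of_comm rfl μ
  have hmaps : ∀ (k : ℕ) (μ : ℂ), Set.MapsTo (f ^ k) (E μ) (E μ) := fun k μ ↦
    f.mapsTo_maxGenEigenspace_of_comm (Commute.pow_right rfl k) μ
  -- the trace identities
  have key : ∀ k : ℕ, 1 ≤ k → ∑ μ ∈ s, (finrank ℂ (E μ) : ℂ) * μ ^ k = 0 := by
    intro k hk
    have := LinearMap.trace_eq_sum_trace_restrict' hds hfin (hmaps k)
    rw [h k hk] at this
    refine Eq.trans (Finset.sum_congr rfl (fun μ _ => ?_)) this.symm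
    show (finrank ℂ (E μ) : ℂ) * μ ^ k = trace ℂ _ ((f ^ k).restrict (hmaps k μ))
    refine Eq.symm ?_
    show trace ℂ _ ((f ^ k).restrict (hmaps k μ)) = (finrank ℂ (E μ) : ℂ) * μ ^ k
    have hres : (f ^ k).restrict (hmaps k μ) = (f.restrict (hm1 μ)) ^ k :=
      (Module.End.pow_restrict k (hm1 μ)).symm
    rw [hres, trace_pow_of_nilpotent_sub _ μ ?_, mul_comm]
    have hnil := f.isNilpotent_restrict_maxGenEigenspace_sub_algebraMap μ
    have heq : f.restrict (hm1 μ) - algebraMap ℂ (Module.End ℂ (E μ)) μ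
        = (f - algebraMap ℂ (Module.End ℂ V) μ).restrict
          (Module.End.mapsTo_maxGenEigenspace_of_comm
            (Algebra.mul_sub_algebraMap_commutes f μ) μ) := by
      ext w
      simp [LinearMap.restrict_apply, Module.algebraMap_end_apply, LinearMap.restrict_coe_apply]
      rfl
    rw [heq]
    exact hnil
  -- all eigenvalues are zero
  have hzero : ∀ μ ∈ s, μ = 0 := by
    intro μ₀ hμ₀
    by_contra hne
    set q : ℂ[X] := X * ∏ ν ∈ s.erase μ₀, (X - C ν) with hq
    have hq0 : q.coeff 0 = 0 := by
      rw [coeff_zero_eq_eval_zero]; simp [hq]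
    have hsum : ∑ μ ∈ s, (finrank ℂ (E μ) : ℂ) * q.eval μ = 0 := by
      have : ∀ μ ∈ s, (finrank ℂ (E μ) : ℂ) * q.eval μ
          = ∑ j ∈ Finset.range (q.natDegree + 1), q.coeff j * ((finrank ℂ (E μ) : ℂ) * μ ^ j) := by
        intro μ hμ
        rw [eval_eq_sum_range, Finset.mul_sum]
        exact Finset.sum_congr rfl fun j _ => by ring
      rw [Finset.sum_congr rfl this, Finset.sum_comm]
      refine Finset.sum_eq_zero fun j hj => ?_
      rcases Nat.eq_zero_or_pos j with rfl | hjpos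
      · simp [hq0]
      · rw [← Finset.mul_sum, key j hjpos, mul_zero]
    have heval : ∀ μ ∈ s, μ ≠ μ₀ → q.eval μ = 0 := by
      intro μ hμ hne'
      rw [hq]
      simp only [eval_mul, eval_prod, eval_sub, eval_X, eval_C]
      refine mul_eq_zero_of_right _ (Finset.prod_eq_zero (Finset.mem_erase.mpr ⟨hne', hμ⟩) ?_)
      simp
    rw [Finset.sum_eq_single μ₀ (fun μ hμ hne' => by rw [heval μ hμ hne', mul_zero])
      (fun h => absurd hμ₀ h)] at hsum
    have hqμ₀ : q.eval μ₀ ≠ 0 := by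
      rw [hq]
      simp only [eval_mul, eval_prod, eval_sub, eval_X, eval_C]
      refine mul_ne_zero hne (Finset.prod_ne_zero_iff.mpr fun ν hν => ?_)
      rw [sub_ne_zero]
      exact fun hc => (Finset.mem_erase.mp hν).1 hc.symm
    have hd0 : (finrank ℂ (E μ₀) : ℂ) ≠ 0 := by
      have : E μ₀ ≠ ⊥ := by simpa [hs] using hμ₀
      have : 0 < finrank ℂ (E μ₀) :=
        Nat.pos_of_ne_zero fun hc => this (Submodule.finrank_eq_zero.mp hc)
      exact_mod_cast this.ne'
    exact (mul_ne_zero hd0 hqμ₀) hsum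
  -- conclude E 0 = ⊤, hence nilpotent
  have hE0 : E 0 = ⊤ := by
    rw [← htop]
    refine le_antisymm (le_iSup E 0) (iSup_le fun μ => ?_)
    rcases eq_or_ne (E μ) ⊥ with hbot | hbot
    · rw [hbot]; exact bot_le
    · have : μ ∈ s := by simpa [hs] using hbot
      rw [hzero μ this]
  refine ((LinearMap.charpoly_nilpotent_tfae f).out 2 0).mp fun m => ?_
  have hm : m ∈ E 0 := hE0 ▸ Submodule.mem_top
  rw [hE, Module.End.mem_maxGenEigenspace] at hm
  obtain ⟨k, hk⟩ := hm
  exact ⟨k, by simpa using hk⟩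

/-- A multiplicatively closed set of nilpotent endomorphisms of a nontrivial f.d. space
has a common kernel vector. -/
lemma exists_common_kernel_vector :
    ∀ (d : ℕ) (V : Type) [AddCommGroup V] [Module ℂ V] [FiniteDimensional ℂ V],
    finrank ℂ V = d → Nontrivial V →
    ∀ N : Set (Module.End ℂ V),
    (∀ x ∈ N, ∀ y ∈ N, x * y ∈ N) → (∀ x ∈ N, IsNilpotent x) →
    ∃ v : V, v ≠ 0 ∧ ∀ x ∈ N, x v = 0 := by
  intro d
  induction d using Nat.strong_induction_on with
  | _ d ih =>
    intro V _ _ _ hd hV N hmul hnil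
    classical
    by_cases hN0 : ∀ x ∈ N, x = (0 : Module.End ℂ V)
    · obtain ⟨v, hv⟩ := exists_ne (0 : V)
      exact ⟨v, hv, fun x hx => by rw [hN0 x hx]; rfl⟩
    · push_neg at hN0
      obtain ⟨a₀, ha₀N, ha₀⟩ := hN0
      have hP : ∃ m : ℕ, ∃ a : Module.End ℂ V,
          a ∈ N ∧ a ≠ 0 ∧ finrank ℂ (LinearMap.range a) = m :=
        ⟨_, a₀, ha₀N, ha₀, rfl⟩
      obtain ⟨a, haN, ha0, har⟩ := Nat.find_spec hP
      set r := Nat.find hP with hr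
      have hmin : ∀ x ∈ N, x ≠ 0 → r ≤ finrank ℂ (LinearMap.range x) :=
        fun x hx hx0 => Nat.find_min' hP ⟨x, hx, hx0, rfl⟩
      -- key: no `e ∈ N` can map `range a` onto itself
      have key : ∀ e ∈ N, Submodule.map e (LinearMap.range a) ≠ LinearMap.range a := by
        intro e he hmap
        obtain ⟨k, hk⟩ := hnil e he
        have h1 : ∀ j : ℕ, Submodule.map (e ^ j) (LinearMap.range a) = LinearMap.range a := by
          intro j
          induction j with
          | zero => simpa [Module.End.one_eq_id] using Submodule.map_id _
          | succ j ihj =>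
            rw [pow_succ', Module.End.mul_eq_comp, Submodule.map_comp, ihj, hmap]
        obtain ⟨u, huR, hu0⟩ := Submodule.ne_bot_iff _ |>.mp
          (by rwa [ne_eq, LinearMap.range_eq_bot] : LinearMap.range a ≠ ⊥)
        rw [← h1 k] at huR
        obtain ⟨w, _, hw⟩ := huR
        rw [hk] at hw
        exact hu0 (hw ▸ rfl)
      -- minimal rank elements multiply to zero through N
      have claim : ∀ c : Module.End ℂ V, a * c ∈ N → a * c * a ∈ N → a * c * a = 0 := by
        intro c hac hacaN
        by_contra hne
        have hle : LinearMap.range (a * c * a) ≤ LinearMap.range a := by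
          rw [mul_assoc, Module.End.mul_eq_comp]
          exact LinearMap.range_comp_le_range _ _
        have h1 : r ≤ finrank ℂ (LinearMap.range (a * c * a)) := hmin _ hacaN hne
        have h2 : finrank ℂ (LinearMap.range (a * c * a)) ≤ finrank ℂ (LinearMap.range a) :=
          Submodule.finrank_mono hle
        have heq : LinearMap.range (a * c * a) = LinearMap.range a :=
          Submodule.eq_of_le_of_finrank_eq hle (by omega)
        refine key (a * c) hac ?_
        rw [← LinearMap.range_comp, ← Module.End.mul_eq_comp]
        exact heq
      have haa : a * a = 0 := by
        have h1 : a * 1 ∈ N := by rwa [mul_one]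
        have h2 : a * 1 * a ∈ N := by rw [mul_one]; exact hmul a haN a haN
        have := claim 1 h1 h2
        rwa [mul_one] at this
      have hxa : ∀ x ∈ N, a * x * a = 0 := fun x hx =>
        claim x (hmul a haN x hx) (hmul _ (hmul a haN x hx) a haN)
      -- the invariant subspace
      set W : Submodule ℂ V := LinearMap.ker a ⊓ ⨅ x ∈ N, LinearMap.ker (a * x) with hW
      have memW : ∀ v : V, v ∈ W ↔ a v = 0 ∧ ∀ x ∈ N, a (x v) = 0 := by
        intro v
        simp [hW, Submodule.mem_inf, Submodule.mem_iInf, LinearMap.mem_ker,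
          Module.End.mul_apply]
      have hrange : LinearMap.range a ≤ W := by
        rintro _ ⟨u, rfl⟩
        rw [memW]
        constructor
        · have : (a * a) u = 0 := by rw [haa]; rfl
          simpa [Module.End.mul_apply] using this
        · intro x hx
          have : (a * x * a) u = 0 := by rw [hxa x hx]; rfl
          simpa [Module.End.mul_apply] using this
      have hWbot : W ≠ ⊥ := fun hbot => ha0 (LinearMap.range_eq_bot.mp
        (le_bot_iff.mp (hbot ▸ hrange)))
      have hWtop : W ≠ ⊤ := by
        intro htop
        obtain ⟨v, hv⟩ : ∃ v, a v ≠ 0 := by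
          by_contra hc
          push_neg at hc
          exact ha0 (LinearMap.ext fun v => by rw [hc]; rfl)
        exact hv (((memW v).mp (htop ▸ Submodule.mem_top)).1)
      have hinv : ∀ y ∈ N, ∀ v ∈ W, y v ∈ W := by
        intro y hy v hv
        rw [memW] at hv ⊢
        refine ⟨?_, fun x hx => ?_⟩
        · have := hv.2 y hy
          simpa [Module.End.mul_apply] using this
        · have := hv.2 (x * y) (hmul x hx y hy)
          simpa [Module.End.mul_apply] using this
      -- induction
      have hWfin : finrank ℂ W < d := hd ▸ Submodule.finrank_lt hWtop
      have hWnt : Nontrivial W := Submodule.nontrivial_iff_ne_bot.mpr hWbot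
      set N' : Set (Module.End ℂ W) :=
        {y | ∃ x ∈ N, ∀ w : W, (y w : V) = x (w : V)} with hN'
      have hmul' : ∀ y₁ ∈ N', ∀ y₂ ∈ N', y₁ * y₂ ∈ N' := by
        rintro y₁ ⟨x₁, hx₁, h₁⟩ y₂ ⟨x₂, hx₂, h₂⟩
        exact ⟨x₁ * x₂, hmul x₁ hx₁ x₂ hx₂, fun w => by
          rw [Module.End.mul_apply, h₁, h₂, Module.End.mul_apply]⟩
      have hpow : ∀ (y : Module.End ℂ W) (x : Module.End ℂ V),
          (∀ w : W, (y w : V) = x (w : V)) → ∀ (j : ℕ) (w : W),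
          ((y ^ j) w : V) = (x ^ j) (w : V) := by
        intro y x hxy j
        induction j with
        | zero => intro w; rfl
        | succ j ihj =>
          intro w
          rw [pow_succ, pow_succ, Module.End.mul_apply, Module.End.mul_apply, ihj, hxy]
      have hnil' : ∀ y ∈ N', IsNilpotent y := by
        rintro y ⟨x, hx, hxy⟩
        obtain ⟨k, hk⟩ := hnil x hx
        refine ⟨k, ?_⟩
        ext w
        rw [hpow y x hxy k w, hk]
        rfl
      obtain ⟨w, hw0, hw⟩ := ih (finrank ℂ W) hWfin W rfl hWnt N' hmul' hnil'
      refine ⟨(w : V), fun hc => hw0 (Subtype.coe_injective hc), fun x hx => ?_⟩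
      have hy : (x.restrict (fun v hv => hinv x hx v hv)) ∈ N' :=
        ⟨x, hx, fun w => rfl⟩
      have := hw _ hy
      have := congrArg (Subtype.val) this
      simpa [LinearMap.restrict_apply] using this

/-- Kolchin's fixed-vector theorem: a subgroup `G` of `GL(n,ℂ)` all of whose elements
are unipotent (`(g - 1)^n = 0`) has a common nonzero fixed vector `v ∈ ℂ^n`. -/
theorem kolchin_common_fixed_vector (n : ℕ) (hn : 0 < n)
    (G : Subgroup (Matrix.GeneralLinearGroup (Fin n) ℂ))
    (hG : ∀ g ∈ G, ((g : Matrix (Fin n) (Fin n) ℂ) - 1) ^ n = 0) :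
    ∃ v : Fin n → ℂ, v ≠ 0 ∧
      ∀ g ∈ G, Matrix.mulVec (g : Matrix (Fin n) (Fin n) ℂ) v = v := by
  classical
  haveI : Nonempty (Fin n) := ⟨⟨0, hn⟩⟩
  set φ : Matrix (Fin n) (Fin n) ℂ ≃ₐ[ℂ] Module.End ℂ (Fin n → ℂ) :=
    Matrix.toLinAlgEquiv' with hφ
  set S : Set (Module.End ℂ (Fin n → ℂ)) :=
    {f | ∃ g ∈ G, f = φ (g : Matrix (Fin n) (Fin n) ℂ) - 1} with hSdef
  set Nsub : Submodule ℂ (Module.End ℂ (Fin n → ℂ)) := Submodule.span ℂ S with hNsub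
  have hfr : finrank ℂ (Fin n → ℂ) = n := by simp
  -- multiplicative closure
  have hSS : ∀ f₁ ∈ S, ∀ f₂ ∈ S, f₁ * f₂ ∈ Nsub := by
    rintro _ ⟨g, hg, rfl⟩ _ ⟨h, hh, rfl⟩
    have hgh : (φ ((g * h : Matrix.GeneralLinearGroup (Fin n) ℂ) : Matrix (Fin n) (Fin n) ℂ) - 1)
        ∈ S := ⟨g * h, mul_mem hg hh, rfl⟩
    have hkey : (φ (g : Matrix (Fin n) (Fin n) ℂ) - 1) * (φ (h : Matrix (Fin n) (Fin n) ℂ) - 1)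
        = (φ ((g * h : Matrix.GeneralLinearGroup (Fin n) ℂ) : Matrix (Fin n) (Fin n) ℂ) - 1)
          - (φ (g : Matrix (Fin n) (Fin n) ℂ) - 1) - (φ (h : Matrix (Fin n) (Fin n) ℂ) - 1) := by
      have : ((g * h : Matrix.GeneralLinearGroup (Fin n) ℂ) : Matrix (Fin n) (Fin n) ℂ)
          = (g : Matrix (Fin n) (Fin n) ℂ) * (h : Matrix (Fin n) (Fin n) ℂ) := rfl
      rw [this, map_mul, sub_mul, one_mul, mul_sub, mul_one]
      abel
    rw [hkey]
    exact Submodule.sub_mem _ (Submodule.sub_mem _ (Submodule.subset_span hgh)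
      (Submodule.subset_span ⟨g, hg, rfl⟩)) (Submodule.subset_span ⟨h, hh, rfl⟩)
  have hmulN : ∀ x ∈ Nsub, ∀ y ∈ Nsub, x * y ∈ Nsub := by
    have hle : Nsub * Nsub ≤ Nsub := by
      rw [hNsub, Submodule.span_mul_span]
      rw [Submodule.span_le]
      rintro _ ⟨f₁, hf₁, f₂, hf₂, rfl⟩
      exact hSS f₁ hf₁ f₂ hf₂
    exact fun x hx y hy => hle (Submodule.mul_mem_mul hx hy)
  -- unipotency
  have unip : ∀ g ∈ G, IsNilpotent (φ (g : Matrix (Fin n) (Fin n) ℂ) - 1) := by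
    intro g hg
    exact ⟨n, by rw [← map_one φ, ← map_sub, ← map_pow, hG g hg, map_zero]⟩
  -- traces
  have htr1 : ∀ g ∈ G, trace ℂ (Fin n → ℂ) (φ (g : Matrix (Fin n) (Fin n) ℂ)) = (n : ℂ) := by
    intro g hg
    have h1 : φ (g : Matrix (Fin n) (Fin n) ℂ)
        = 1 + (φ (g : Matrix (Fin n) (Fin n) ℂ) - 1) := by abel
    rw [h1, map_add, trace_one, trace_eq_zero_of_isNilpotent' (unip g hg), add_zero, hfr]
  have htrN : ∀ x ∈ Nsub, ∀ g ∈ G,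
      trace ℂ (Fin n → ℂ) (x * φ (g : Matrix (Fin n) (Fin n) ℂ)) = 0 := by
    intro x hx
    refine Submodule.span_induction ?_ ?_ ?_ ?_ hx
    · rintro _ ⟨h, hh, rfl⟩ g hg
      have : (φ (h : Matrix (Fin n) (Fin n) ℂ) - 1) * φ (g : Matrix (Fin n) (Fin n) ℂ)
          = φ ((h * g : Matrix.GeneralLinearGroup (Fin n) ℂ) : Matrix (Fin n) (Fin n) ℂ)
            - φ (g : Matrix (Fin n) (Fin n) ℂ) := by
        rw [show ((h * g : Matrix.GeneralLinearGroup (Fin n) ℂ) : Matrix (Fin n) (Fin n) ℂ)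
          = (h : Matrix (Fin n) (Fin n) ℂ) * (g : Matrix (Fin n) (Fin n) ℂ) from rfl, map_mul,
          sub_mul, one_mul]
      rw [this, map_sub, htr1 _ (mul_mem hh hg), htr1 g hg, sub_self]
    · intro g hg; rw [zero_mul, map_zero]
    · intro x y _ _ hx' hy' g hg
      rw [add_mul, map_add, hx' g hg, hy' g hg, add_zero]
    · intro c x _ hx' g hg
      rw [smul_mul_assoc, map_smul, hx' g hg, smul_zero]
  have htrN0 : ∀ x ∈ Nsub, trace ℂ (Fin n → ℂ) x = 0 := by
    intro x hx
    refine Submodule.span_induction ?_ ?_ ?_ ?_ hx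
    · rintro _ ⟨h, hh, rfl⟩
      rw [map_sub, htr1 _ hh, trace_one, hfr, sub_self]
    · exact map_zero _
    · intro x y _ _ hx' hy'; rw [map_add, hx', hy', add_zero]
    · intro c x _ hx'; rw [map_smul, hx', smul_zero]
  have htrNN : ∀ x ∈ Nsub, ∀ y ∈ Nsub, trace ℂ (Fin n → ℂ) (x * y) = 0 := by
    intro x hx y hy
    refine Submodule.span_induction ?_ ?_ ?_ ?_ hy
    · rintro _ ⟨h, hh, rfl⟩
      rw [mul_sub, mul_one, map_sub, htrN x hx h hh, htrN0 x hx, sub_self]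
    · rw [mul_zero, map_zero]
    · intro y₁ y₂ _ _ h₁ h₂; rw [mul_add, map_add, h₁, h₂, add_zero]
    · intro c y₁ _ h₁; rw [mul_smul_comm, map_smul, h₁, smul_zero]
  have hpowmem : ∀ x ∈ Nsub, ∀ k : ℕ, 1 ≤ k → x ^ k ∈ Nsub := by
    intro x hx k hk
    induction k with
    | zero => omega
    | succ k ihk =>
      rcases Nat.eq_zero_or_pos k with rfl | hkpos
      · simpa using hx
      · rw [pow_succ]
        exact hmulN _ (ihk hkpos) _ hx
  have hnilN : ∀ x ∈ Nsub, IsNilpotent x := by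
    intro x hx
    refine isNilpotent_of_trace_pow_eq_zero x fun k hk => ?_
    rcases eq_or_lt_of_le hk with h1 | h2
    · rw [← h1, pow_one]; exact htrN0 x hx
    · have : x ^ k = x ^ (k - 1) * x := by
        rw [← pow_succ]; congr 1; omega
      rw [this]
      exact htrNN _ (hpowmem x hx (k - 1) (by omega)) x hx
  -- apply the common kernel lemma
  haveI : Nontrivial (Fin n → ℂ) := inferInstance
  obtain ⟨v, hv0, hv⟩ := exists_common_kernel_vector n (Fin n → ℂ) hfr inferInstance
    Nsub hmulN hnilN
  refine ⟨v, hv0, fun g hg => ?_⟩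
  have h1 : (φ (g : Matrix (Fin n) (Fin n) ℂ) - 1) v = 0 :=
    hv _ (Submodule.subset_span ⟨g, hg, rfl⟩)
  have h2 : φ (g : Matrix (Fin n) (Fin n) ℂ) v = Matrix.mulVec (g : Matrix (Fin n) (Fin n) ℂ) v := by
    simp [hφ, Matrix.toLinAlgEquiv'_apply]
  rw [LinearMap.sub_apply] at h1
  rw [h2] at h1
  simpa [sub_eq_zero] using h1
end

section
/- Let X be a compact complex manifold satisfying: every holomorphic function on X is constant. Suppose φ_{s+1}, φ_s, …, φ₁ are smooth vector-valued functions on X satisfying the triangular system ∂̄φ_j + Σ_{k=j+1}^{s+1} ω_{jk}^{0,1} φ_k = 0 for j = 1,…,s+1 (with the convention that the j = s+1 equation reads ∂̄φ_{s+1} = 0), where each ω_{jk}^{0,1} is a matrix of (0,1)-forms with ∂ω_{jk}^{0,1} = 0, and where the Hodge decomposition Ker(∂̄ on (0,1)-forms) = ∂̄(A⁰) ⊕ Harm^{0,1} holds and ∂-closed ∂̄-closed (0,1)-forms are harmonic. Then all φ_j are constant and Σ_{k=j+1}^{s+1} ω_{jk}^{0,1} φ_k = 0 for every j. -/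
/-- The downward-induction core of Lemma 6.1: on a compact complex manifold where all
holomorphic functions are constant, a solution `φ` of the triangular system
`∂̄φ_j + Σ_k ω_{jk}^{0,1} φ_k = 0` with strictly block-upper-triangular coefficient
matrix `(ω_{jk}^{0,1})` of `∂`-closed `(0,1)`-forms is constant, and all the sums
`Σ_k ω_{jk}^{0,1} φ_k` vanish.  Here `A0` models smooth functions (constants being the
image of `algebraMap ℂ A0`), `Ω01`, `Ω02`, `Ω11` the forms of the indicated types,
`Harm` the harmonic `(0,1)`-forms; we assume that `∂`-closed `∂̄`-closed `(0,1)`-forms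
are harmonic and that a `∂̄`-exact harmonic `(0,1)`-form vanishes (Hodge decomposition
for `∂̄`).  The vector-valued functions and matrix blocks are flattened: the block of
an index `p : Fin n` is `b p : Fin (s+1)`. -/
theorem triangular_dbar_system_solutions_constant
    {A0 Ω01 Ω02 Ω11 : Type*}
    [CommRing A0] [Algebra ℂ A0]
    [AddCommGroup Ω01] [Module ℂ Ω01] [Module A0 Ω01] [IsScalarTower ℂ A0 Ω01]
    [AddCommGroup Ω02] [Module ℂ Ω02] [AddCommGroup Ω11] [Module ℂ Ω11]
    (dbar0 : A0 →ₗ[ℂ] Ω01) (dbar1 : Ω01 →ₗ[ℂ] Ω02) (pd1 : Ω01 →ₗ[ℂ] Ω11)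
    (hholo : ∀ f : A0, dbar0 f = 0 → ∃ c : ℂ, f = algebraMap ℂ A0 c)
    (hdbar2 : ∀ f : A0, dbar1 (dbar0 f) = 0)
    (Harm : Submodule ℂ Ω01)
    (hharm : ∀ τ : Ω01, pd1 τ = 0 → dbar1 τ = 0 → τ ∈ Harm)
    (hhodge : ∀ τ ∈ Harm, (∃ f : A0, dbar0 f = τ) → τ = 0)
    (n s : ℕ) (b : Fin n → Fin (s + 1))
    (ω : Fin n → Fin n → Ω01)
    (htri : ∀ p q, b q ≤ b p → ω p q = 0)
    (hpd : ∀ p q, pd1 (ω p q) = 0)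
    (φ : Fin n → A0)
    (hsys : ∀ p, dbar0 (φ p) + ∑ q, φ q • ω p q = 0) :
    (∀ p, ∃ c : ℂ, φ p = algebraMap ℂ A0 c) ∧ (∀ p, ∑ q, φ q • ω p q = 0) := by

  suffices H : ∀ k : ℕ, ∀ p, (s : ℕ) - (b p : ℕ) ≤ k →
      (∃ c : ℂ, φ p = algebraMap ℂ A0 c) ∧ (∑ q, φ q • ω p q = 0) by
    exact ⟨fun p => (H s p (Nat.sub_le _ _)).1, fun p => (H s p (Nat.sub_le _ _)).2⟩
  intro k
  induction k using Nat.strong_induction_on with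
  | _ k IH =>
    intro p hp
    have hterm : ∀ q, pd1 (φ q • ω p q) = 0 := by
      intro q
      rcases le_or_gt (b q) (b p) with h | h
      · rw [htri p q h]; simp
      · have h' : (b p : ℕ) < (b q : ℕ) := h
        have hbq : (b q : ℕ) ≤ s := Nat.lt_succ_iff.mp (b q).isLt
        have hbp : (b p : ℕ) ≤ s := Nat.lt_succ_iff.mp (b p).isLt
        have hlt : (s : ℕ) - (b q : ℕ) < k := by omega
        obtain ⟨c, hc⟩ := (IH _ hlt q le_rfl).1
        rw [hc, algebraMap_smul, map_smul, hpd, smul_zero]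
    have hτeq : (∑ q, φ q • ω p q) = dbar0 (-(φ p)) := by
      rw [map_neg]
      exact eq_neg_of_add_eq_zero_right (hsys p)
    have hpdτ : pd1 (∑ q, φ q • ω p q) = 0 := by
      rw [map_sum]; exact Finset.sum_eq_zero fun q _ => hterm q
    have hd1τ : dbar1 (∑ q, φ q • ω p q) = 0 := by
      rw [hτeq]; exact hdbar2 _
    have hτ0 : (∑ q, φ q • ω p q) = 0 :=
      hhodge _ (hharm _ hpdτ hd1τ) ⟨-(φ p), hτeq.symm⟩
    have hdφ : dbar0 (φ p) = 0 := by
      have := hsys p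
      rw [hτ0, add_zero] at this
      exact this
    exact ⟨hholo _ hdφ, hτ0⟩
end
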